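/- Suppose rank(X) = n and the outputs are generated noise-free as y_t = ⟨x_t, θ^o⟩ + f_t for all t ∈ 𝕀, for some θ^o ∈ ℝ^n and f ∈ ℝ^N, so that I⁰(θ^o) = {t ∈ 𝕀 : f_t = 0}. If |I⁰(θ^o)| > N − 1/(2 r(X)), then θ^o is the unique minimizer of the ℓ1 problem: ‖φ(θ^o)‖₁ < ‖φ(θ)‖₁ for all θ ≠ θ^o. -/

import Mathlib

open Matrix Finset

/-- The Gram matrix `X X^⊤` of the regressor matrix `X`. -/
noncomputable def gramX (n N : ℕ) (x : Fin N → Fin n → ℝ) :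
    Matrix (Fin n) (Fin n) ℝ :=
  Matrix.of fun i j => ∑ t, x t i * x t j

/-- `r(X) = max_{(k,t) ∈ 𝕀²} |x_k^⊤ (X X^⊤)⁻¹ x_t|`, expressed as the supremum
of the (finite, nonempty when `N ≥ 1`) set of such values. -/
noncomputable def rX (n N : ℕ) (x : Fin N → Fin n → ℝ) : ℝ :=
  sSup {v : ℝ | ∃ k t : Fin N, v = |x k ⬝ᵥ ((gramX n N x)⁻¹ *ᵥ x t)|}

/-- Noise-free data, `rank X = n` and
`|I⁰(θ^o)| > N − 1/(2 r(X))` imply that `θ^o` is the unique minimizer of the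
ℓ1 problem. -/
theorem stmt10 (n N : ℕ) (hn : 1 ≤ n) (hN : 1 ≤ N)
    (x : Fin N → Fin n → ℝ) (y : Fin N → ℝ)
    (θo : Fin n → ℝ) (f : Fin N → ℝ)
    (hrank : (Matrix.of fun i t => x t i : Matrix (Fin n) (Fin N) ℝ).rank = n)
    (hdata : ∀ t, y t = x t ⬝ᵥ θo + f t)
    (hcard : (((univ.filter (fun t => x t ⬝ᵥ θo = y t)).card : ℝ)) >
      (N : ℝ) - 1 / (2 * rX n N x)) :
    ∀ θ : Fin n → ℝ, θ ≠ θo →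
      ∑ t, |y t - x t ⬝ᵥ θo| < ∑ t, |y t - x t ⬝ᵥ θ| := by
  intro θ hθ
  classical
  set X : Matrix (Fin n) (Fin N) ℝ := Matrix.of fun i t => x t i with hX
  set G : Matrix (Fin n) (Fin n) ℝ := gramX n N x with hG
  have hGX : G = X * Xᵀ := by
    ext i j
    simp [hG, gramX, hX, Matrix.mul_apply]
  -- G is invertible
  have hGrank : G.rank = n := by
    rw [hGX, Matrix.rank_self_mul_transpose, hrank]
  have hGunit : IsUnit G := by
    rw [← Matrix.mulVec_surjective_iff_isUnit]
    have htop : LinearMap.range G.mulVecLin = ⊤ := by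
      apply Submodule.eq_top_of_finrank_eq
      have : Module.finrank ℝ (LinearMap.range G.mulVecLin) = G.rank := rfl
      rw [this, hGrank, Module.finrank_pi, Fintype.card_fin]
    intro w
    obtain ⟨u, hu⟩ := LinearMap.range_eq_top.mp htop w
    exact ⟨u, hu⟩
  have hdet : IsUnit G.det := (Matrix.isUnit_iff_isUnit_det G).mp hGunit
  have hinv : G⁻¹ * G = 1 := Matrix.nonsing_inv_mul G hdet
  -- Δ and v
  set Δ : Fin n → ℝ := θo - θ with hΔdef
  have hΔ : Δ ≠ 0 := sub_ne_zero.mpr (Ne.symm hθ)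
  set v : Fin N → ℝ := fun t => x t ⬝ᵥ Δ with hv
  have key1 : G *ᵥ Δ = X *ᵥ v := by
    ext i
    simp only [Matrix.mulVec, dotProduct, hG, gramX, hX, Matrix.of_apply, hv,
      Finset.sum_mul, Finset.mul_sum]
    rw [Finset.sum_comm]
    exact Finset.sum_congr rfl fun t _ => Finset.sum_congr rfl fun j _ => by ring
  have hΔeq : Δ = G⁻¹ *ᵥ (X *ᵥ v) := by
    rw [← key1, Matrix.mulVec_mulVec, hinv, Matrix.one_mulVec]
  -- v is nonzero
  have hvne : ∃ t, v t ≠ 0 := by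
    by_contra h
    push_neg at h
    have hv0 : v = 0 := funext h
    apply hΔ
    rw [hΔeq, hv0, Matrix.mulVec_zero, Matrix.mulVec_zero]
  -- the coefficients
  set c : Fin N → Fin N → ℝ := fun k t => x k ⬝ᵥ (G⁻¹ *ᵥ x t) with hc
  have key2 : ∀ k, v k = ∑ t, c k t * v t := by
    intro k
    have step1 : v k = x k ⬝ᵥ (G⁻¹ *ᵥ (X *ᵥ v)) := by rw [← hΔeq]
    rw [step1, Matrix.dotProduct_mulVec, Matrix.dotProduct_mulVec]
    simp only [dotProduct]
    refine Finset.sum_congr rfl fun t _ => ?_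
    congr 1
    show (x k ᵥ* G⁻¹ ᵥ* X) t = x k ⬝ᵥ (G⁻¹ *ᵥ x t)
    simp only [Matrix.vecMul, Matrix.mulVec, dotProduct, hX, Matrix.of_apply,
      Finset.sum_mul, Finset.mul_sum]
    rw [Finset.sum_comm]
    exact Finset.sum_congr rfl fun i _ => Finset.sum_congr rfl fun j _ => by ring
  -- r facts
  set r : ℝ := rX n N x with hr
  have hsetfin : ({w : ℝ | ∃ k t : Fin N, w = |x k ⬝ᵥ ((gramX n N x)⁻¹ *ᵥ x t)|}).Finite := by
    have : {w : ℝ | ∃ k t : Fin N, w = |x k ⬝ᵥ ((gramX n N x)⁻¹ *ᵥ x t)|} =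
        (fun p : Fin N × Fin N => |x p.1 ⬝ᵥ ((gramX n N x)⁻¹ *ᵥ x p.2)|) '' Set.univ := by
      ext w
      constructor
      · rintro ⟨k, t, rfl⟩; exact ⟨(k, t), trivial, rfl⟩
      · rintro ⟨⟨k, t⟩, -, rfl⟩; exact ⟨k, t, rfl⟩
    rw [this]
    exact (Set.finite_univ).image _
  have hcle : ∀ k t, |c k t| ≤ r := by
    intro k t
    exact le_csSup hsetfin.bddAbove ⟨k, t, rfl⟩
  have hr0 : 0 ≤ r := by
    have k0 : Fin N := ⟨0, hN⟩
    exact le_trans (abs_nonneg _) (hcle k0 k0)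
  -- the index set
  set I : Finset (Fin N) := univ.filter (fun t => x t ⬝ᵥ θo = y t) with hI
  set Ic : Finset (Fin N) := univ.filter (fun t => ¬ (x t ⬝ᵥ θo = y t)) with hIc
  have hIcard : I.card + Ic.card = N := by
    rw [hI, hIc, Finset.card_filter_add_card_filter_not, Finset.card_univ,
      Fintype.card_fin]
  -- S
  set S : ℝ := ∑ t, |v t| with hS
  have hS0 : 0 < S := by
    obtain ⟨t0, ht0⟩ := hvne
    have := Finset.sum_pos' (fun t _ => abs_nonneg (v t))
      ⟨t0, Finset.mem_univ t0, abs_pos.mpr ht0⟩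
    exact this
  have hvb : ∀ k, |v k| ≤ r * S := by
    intro k
    rw [key2 k]
    calc |∑ t, c k t * v t| ≤ ∑ t, |c k t * v t| := Finset.abs_sum_le_sum_abs _ _
      _ ≤ ∑ t, r * |v t| := by
          refine Finset.sum_le_sum fun t _ => ?_
          rw [abs_mul]
          exact mul_le_mul_of_nonneg_right (hcle k t) (abs_nonneg _)
      _ = r * S := by rw [hS, Finset.mul_sum]
  -- r > 0
  have hmN : (I.card : ℝ) ≤ N := by
    have : I.card ≤ N := by omega
    exact_mod_cast this
  have hrpos : 0 < r := by
    rcases hr0.lt_or_eq with h | h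
    · exact h
    · exfalso
      rw [← h] at hcard
      norm_num at hcard
      linarith
  have hNm : ((N : ℝ) - I.card) * r < 1 / 2 := by
    have h1 : (N : ℝ) - I.card < 1 / (2 * r) := by rw [hr] at hcard ⊢; linarith
    have h2 : ((N : ℝ) - I.card) * r < (1 / (2 * r)) * r :=
      mul_lt_mul_of_pos_right h1 hrpos
    have h3 : (1 / (2 * r)) * r = 1 / 2 := by field_simp
    linarith
  -- sum splits
  have hsplit : ∀ g : Fin N → ℝ, ∑ t, g t = ∑ t ∈ I, g t + ∑ t ∈ Ic, g t := by
    intro g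
    rw [hI, hIc]
    exact (Finset.sum_filter_add_sum_filter_not univ _ g).symm
  have hBc : ∑ t ∈ Ic, |v t| ≤ ((N : ℝ) - I.card) * (r * S) := by
    have h1 : ∑ t ∈ Ic, |v t| ≤ Ic.card • (r * S) :=
      Finset.sum_le_card_nsmul _ _ _ (fun t _ => hvb t)
    rw [nsmul_eq_mul] at h1
    have h2 : (Ic.card : ℝ) = (N : ℝ) - I.card := by
      have : (I.card : ℝ) + Ic.card = N := by exact_mod_cast hIcard
      linarith
    rw [h2] at h1
    exact h1
  -- on I the error is 0
  have heI : ∀ t ∈ I, y t - x t ⬝ᵥ θo = 0 := by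
    intro t ht
    rw [hI] at ht
    have := (Finset.mem_filter.mp ht).2
    linarith
  -- rewrite the fitting error for θ
  have hrew : ∀ t, y t - x t ⬝ᵥ θ = (y t - x t ⬝ᵥ θo) + v t := by
    intro t
    show y t - x t ⬝ᵥ θ = y t - x t ⬝ᵥ θo + x t ⬝ᵥ (θo - θ)
    rw [dotProduct_sub]
    ring
  -- bounds on sums
  have hL1 : ∑ t ∈ I, |y t - x t ⬝ᵥ θ| = ∑ t ∈ I, |v t| := by
    refine Finset.sum_congr rfl fun t ht => ?_
    rw [hrew t, heI t ht, zero_add]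
  have hL2 : ∑ t ∈ Ic, (|y t - x t ⬝ᵥ θo| - |v t|) ≤ ∑ t ∈ Ic, |y t - x t ⬝ᵥ θ| := by
    refine Finset.sum_le_sum fun t _ => ?_
    rw [hrew t]
    have := abs_sub_abs_le_abs_sub (y t - x t ⬝ᵥ θo) (-(v t))
    rw [abs_neg, sub_neg_eq_add] at this
    exact this
  have hE : ∑ t, |y t - x t ⬝ᵥ θo| = ∑ t ∈ Ic, |y t - x t ⬝ᵥ θo| := by
    rw [hsplit (fun t => |y t - x t ⬝ᵥ θo|)]
    have : ∑ t ∈ I, |y t - x t ⬝ᵥ θo| = 0 := by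
      refine Finset.sum_eq_zero fun t ht => ?_
      rw [heI t ht, abs_zero]
    rw [this, zero_add]
  have hSsplit : S = ∑ t ∈ I, |v t| + ∑ t ∈ Ic, |v t| := by
    rw [hS]; exact hsplit _
  have hprod : (((N : ℝ) - I.card) * r) * S < (1 / 2) * S :=
    mul_lt_mul_of_pos_right hNm hS0
  have hsub : ∑ t ∈ Ic, (|y t - x t ⬝ᵥ θo| - |v t|) =
      ∑ t ∈ Ic, |y t - x t ⬝ᵥ θo| - ∑ t ∈ Ic, |v t| := Finset.sum_sub_distrib _ _
  rw [hsplit (fun t => |y t - x t ⬝ᵥ θ|), hE, hL1]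
  rw [hsub] at hL2
  have : (((N : ℝ) - I.card) * r) * S = ((N : ℝ) - I.card) * (r * S) := by ring
  linarith
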